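/- (Theorem 1, tightness.) Let Z and H be countable alphabets, m ≥ 1, P a probability mass function on Z, and Q a learning kernel assigning to each S ∈ Z^m a pmf Q(·|S) on H. Let μ be the joint pmf of (Z_trn, H) with marginals μ_Z (= P) and μ_H. Define the loss function L⋆(h,z) = 1 if μ_Z(z)·μ_H(h) ≥ μ(z,h) and L⋆(h,z) = 0 otherwise. Then L⋆ takes values in [0,1] and the corresponding true and empirical risks satisfy R − R_emp = I(Z_trn, H); hence the bound |R − R_emp| ≤ I(Z_trn, H) is achieved. -/

import Mathlib

set_option maxHeartbeats 1000000


/-- Total variation distance between two pmfs: `1 - ∑ min`. -/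
noncomputable def tv {A : Type*} (p q : A → ℝ) : ℝ := 1 - ∑' a, min (p a) (q a)

/-- `p` is a probability mass function: nonnegative and summing to `1`. -/
def IsPMF {A : Type*} (p : A → ℝ) : Prop := (∀ a, 0 ≤ p a) ∧ HasSum p 1

/-- Product pmf `P^{⊗m}` of `m` i.i.d. draws from `P`. -/
noncomputable def prodPMF {Z : Type*} (m : ℕ) (P : Z → ℝ) (S : Fin m → Z) : ℝ :=
  ∏ i, P (S i)

/-- Joint pmf of a uniformly drawn training example `Z_trn` and the inferred
hypothesis `H`: `μ(z,h) = ∑_S P^{⊗m}(S) · (1/m)∑_i 1{S_i = z} · Q(h|S)`. -/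
noncomputable def jointZH {Z H : Type*} (m : ℕ) (P : Z → ℝ)
    (Q : (Fin m → Z) → H → ℝ) (z : Z) (h : H) : ℝ :=
  haveI := Classical.decEq Z
  ∑' S : Fin m → Z,
    prodPMF m P S * ((1 / (m : ℝ)) * ∑ i, if S i = z then (1 : ℝ) else 0) * Q S h

/-- Marginal of `Z_trn` under the joint pmf `jointZH`. -/
noncomputable def margZ {Z H : Type*} (m : ℕ) (P : Z → ℝ)
    (Q : (Fin m → Z) → H → ℝ) (z : Z) : ℝ :=
  ∑' h : H, jointZH m P Q z h

/-- Marginal of the hypothesis `H` under the joint pmf `jointZH`. -/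
noncomputable def margH {Z H : Type*} (m : ℕ) (P : Z → ℝ)
    (Q : (Fin m → Z) → H → ℝ) (h : H) : ℝ :=
  ∑' z : Z, jointZH m P Q z h

/-- Mutual affinity `I(Z_trn, H) = ‖μ_Z ⊗ μ_H, μ‖`. -/
noncomputable def affinity {Z H : Type*} (m : ℕ) (P : Z → ℝ)
    (Q : (Fin m → Z) → H → ℝ) : ℝ :=
  tv (fun p : Z × H => margZ m P Q p.1 * margH m P Q p.2)
    (fun p : Z × H => jointZH m P Q p.1 p.2)

/-- True risk `R(𝓛) = ∑_S P^{⊗m}(S) ∑_h Q(h|S) ∑_z P(z)·L(h,z)`. -/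
noncomputable def trueRisk {Z H : Type*} (m : ℕ) (P : Z → ℝ)
    (Q : (Fin m → Z) → H → ℝ) (L : H → Z → ℝ) : ℝ :=
  ∑' S : Fin m → Z, prodPMF m P S * ∑' h : H, Q S h * ∑' z : Z, P z * L h z

/-- Empirical risk `R_emp(𝓛) = ∑_S P^{⊗m}(S) ∑_h Q(h|S)·(1/m)∑_i L(h,S_i)`. -/
noncomputable def empRisk {Z H : Type*} (m : ℕ) (P : Z → ℝ)
    (Q : (Fin m → Z) → H → ℝ) (L : H → Z → ℝ) : ℝ :=
  ∑' S : Fin m → Z, prodPMF m P S * ∑' h : H, Q S h * ((1 / (m : ℝ)) * ∑ i, L h (S i))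

/-- Learning capacity `C^(m)(𝓛) = sup_P I(Z_trn, H)`. -/
noncomputable def capacity {Z H : Type*} (m : ℕ)
    (Q : (Fin m → Z) → H → ℝ) : ℝ :=
  sSup {c : ℝ | ∃ P : Z → ℝ, IsPMF P ∧ c = affinity m P Q}

section Aux9

noncomputable def aux9fr {Z : Type*} (m : ℕ) (z : Z) (S : Fin m → Z) : ℝ :=
  haveI := Classical.decEq Z
  (1 / (m : ℝ)) * ∑ i, if S i = z then (1 : ℝ) else 0

lemma aux9_hasSum_mul {A B : Type*} {f : A → ℝ} {g : B → ℝ} {a b : ℝ}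
    (hf0 : ∀ x, 0 ≤ f x) (hg0 : ∀ y, 0 ≤ g y) (hf : HasSum f a) (hg : HasSum g b) :
    HasSum (fun p : A × B => f p.1 * g p.2) (a * b) := by
  have h0 : (0 : A × B → ℝ) ≤ fun p : A × B => f p.1 * g p.2 := by
    intro p; exact mul_nonneg (hf0 _) (hg0 _)
  have key := summable_prod_of_nonneg (f := fun p : A × B => f p.1 * g p.2) h0
  have h1 : ∀ x : A, Summable (fun y : B => f x * g y) := fun x => hg.summable.mul_left _
  have h2 : Summable (fun x : A => ∑' y : B, f x * g y) := by
    have h3 : (fun x : A => ∑' y : B, f x * g y) = fun x => f x * b := by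
      funext x
      rw [tsum_mul_left, hg.tsum_eq]
    rw [h3]
    exact hf.summable.mul_right b
  exact hf.mul hg (key.mpr ⟨h1, h2⟩)

lemma aux9_hasSum_pi {Z : Type*} :
    ∀ (n : ℕ) (g : Fin n → Z → ℝ) (a : Fin n → ℝ),
      (∀ i x, 0 ≤ g i x) → (∀ i, HasSum (g i) (a i)) →
      HasSum (fun S : Fin n → Z => ∏ i, g i (S i)) (∏ i, a i) := by
  intro n
  induction n with
  | zero =>
    intro g a _ _
    have h := hasSum_single (f := fun S : Fin 0 → Z => ∏ i, g i (S i))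
      (fun i => i.elim0) (fun b' hb' => absurd (funext fun i => i.elim0) hb')
    simpa using h
  | succ n ih =>
    intro g a hg0 hg
    have hG0 : ∀ T : Fin n → Z, 0 ≤ ∏ i, g i.succ (T i) :=
      fun T => Finset.prod_nonneg fun i _ => hg0 _ _
    have h2 := aux9_hasSum_mul (hg0 0) hG0 (hg 0)
      (ih (fun i => g i.succ) (fun i => a i.succ) (fun i x => hg0 _ _) (fun i => hg _))
    rw [Fin.prod_univ_succ]
    refine ((Fin.consEquiv fun _ : Fin (n+1) => Z).hasSum_iff).mp ?_
    have he : ((fun S : Fin (n+1) → Z => ∏ i, g i (S i)) ∘ (Fin.consEquiv fun _ : Fin (n+1) => Z))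
        = fun p : Z × (Fin n → Z) => g 0 p.1 * ∏ i, g i.succ (p.2 i) := by
      funext p
      simp [Function.comp, Fin.prod_univ_succ]
    rw [he]
    exact h2

lemma aux9_prod_nonneg {Z : Type*} (m : ℕ) {P : Z → ℝ} (hP0 : ∀ x, 0 ≤ P x) :
    ∀ S, 0 ≤ prodPMF m P S := fun S => Finset.prod_nonneg fun i _ => hP0 _

lemma aux9_prod_hasSum {Z : Type*} (m : ℕ) {P : Z → ℝ} (hP0 : ∀ x, 0 ≤ P x)
    (hP1 : HasSum P 1) : HasSum (prodPMF m P) 1 := by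
  have h := aux9_hasSum_pi m (fun _ => P) (fun _ => 1) (fun _ x => hP0 x) (fun _ => hP1)
  have h' : HasSum (fun S : Fin m → Z => ∏ i, P (S i)) 1 := by simpa using h
  exact h'

lemma aux9_margin {Z : Type*} [DecidableEq Z] {m : ℕ} {P : Z → ℝ} (hP0 : ∀ x, 0 ≤ P x)
    (hP1 : HasSum P 1) (i : Fin m) (z : Z) :
    HasSum (fun S : Fin m → Z => prodPMF m P S * if S i = z then (1:ℝ) else 0) (P z) := by
  have hterm : ∀ j : Fin m, HasSum (fun x : Z => P x * if j = i then (if x = z then (1:ℝ) else 0) else 1)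
      (if j = i then P z else 1) := by
    intro j
    by_cases hj : j = i
    · have hfe : (fun x : Z => P x * if j = i then (if x = z then (1:ℝ) else 0) else 1)
          = fun x => if x = z then P z else 0 := by
        funext x
        rw [if_pos hj]
        by_cases hx : x = z
        · subst hx; simp
        · simp [hx]
      rw [hfe, if_pos hj]
      exact hasSum_ite_eq z (P z)
    · simp only [if_neg hj, mul_one]
      exact hP1
  have key := aux9_hasSum_pi m
      (fun j x => P x * if j = i then (if x = z then (1:ℝ) else 0) else 1)
      (fun j => if j = i then P z else 1)
      (fun j x => mul_nonneg (hP0 x) (by split_ifs <;> norm_num))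
      hterm
  have hfun : (fun S : Fin m → Z =>
        ∏ j, (P (S j) * if j = i then (if S j = z then (1:ℝ) else 0) else 1))
      = fun S => prodPMF m P S * if S i = z then (1:ℝ) else 0 := by
    funext S
    rw [Finset.prod_mul_distrib]
    unfold prodPMF
    congr 1
    rw [Finset.prod_eq_single i (fun j _ hj => if_neg hj) (by simp)]
    simp
  have hval : (∏ j : Fin m, if j = i then P z else 1) = P z := by
    rw [Finset.prod_eq_single i (fun j _ hj => if_neg hj) (by simp)]
    simp
  rw [hfun, hval] at key
  exact key

lemma aux9_nu_fr {Z : Type*} {m : ℕ} (hm : 1 ≤ m) {P : Z → ℝ} (hP0 : ∀ x, 0 ≤ P x)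
    (hP1 : HasSum P 1) (z : Z) :
    HasSum (fun S : Fin m → Z => prodPMF m P S * aux9fr m z S) (P z) := by
  letI := Classical.decEq Z
  have h2 : HasSum (fun S : Fin m → Z => ∑ i : Fin m, prodPMF m P S * if S i = z then (1:ℝ) else 0)
      (∑ _i : Fin m, P z) := hasSum_sum fun i _ => aux9_margin hP0 hP1 i z
  have h3 := h2.mul_left (1/(m:ℝ))
  have hm0 : ((m:ℝ)) ≠ 0 := Nat.cast_ne_zero.mpr (by omega)
  have hfun : (fun S : Fin m → Z =>
        (1/(m:ℝ)) * ∑ i : Fin m, prodPMF m P S * if S i = z then (1:ℝ) else 0)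
      = fun S => prodPMF m P S * aux9fr m z S := by
    funext S
    show _ = prodPMF m P S * ((1/(m:ℝ)) * ∑ i, if S i = z then (1:ℝ) else 0)
    rw [show (∑ i : Fin m, prodPMF m P S * if S i = z then (1:ℝ) else 0)
        = prodPMF m P S * ∑ i : Fin m, (if S i = z then (1:ℝ) else 0) from
        (Finset.mul_sum _ _ _).symm]
    ring
  have hval : (1/(m:ℝ)) * (∑ _i : Fin m, P z) = P z := by
    simp only [Finset.sum_const, Finset.card_univ, Fintype.card_fin, nsmul_eq_mul]
    field_simp
  rw [hfun, hval] at h3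
  exact h3

lemma aux9_fr_nonneg {Z : Type*} (m : ℕ) (z : Z) (S : Fin m → Z) : 0 ≤ aux9fr m z S := by
  unfold aux9fr
  exact mul_nonneg (by positivity) (Finset.sum_nonneg fun i _ => by split <;> norm_num)

lemma aux9_fr_le_one {Z : Type*} (m : ℕ) (z : Z) (S : Fin m → Z) : aux9fr m z S ≤ 1 := by
  letI := Classical.decEq Z
  unfold aux9fr
  rcases Nat.eq_zero_or_pos m with h | h
  · subst h; simp
  have hm' : (0:ℝ) < m := by exact_mod_cast h
  have hb : (∑ i : Fin m, if S i = z then (1:ℝ) else 0) ≤ (m : ℝ) := by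
    calc (∑ i : Fin m, if S i = z then (1:ℝ) else 0) ≤ ∑ _i : Fin m, (1:ℝ) :=
          Finset.sum_le_sum (fun i _ => by split <;> norm_num)
      _ = m := by simp
  calc (1/(m:ℝ)) * ∑ i : Fin m, (if S i = z then (1:ℝ) else 0)
      ≤ (1/(m:ℝ)) * m := mul_le_mul_of_nonneg_left hb (by positivity)
    _ = 1 := by field_simp

lemma aux9_fr_hasSum {Z : Type*} {m : ℕ} (hm : 1 ≤ m) (S : Fin m → Z) :
    HasSum (fun z => aux9fr m z S) 1 := by
  letI := Classical.decEq Z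
  have h1 : ∀ i : Fin m, HasSum (fun z : Z => if S i = z then (1:ℝ) else 0) 1 := by
    intro i
    have hfe : (fun z : Z => if S i = z then (1:ℝ) else 0)
        = fun z => if z = S i then (1:ℝ) else 0 := by
      funext z
      by_cases hz : z = S i
      · subst hz; simp
      · have hz' : ¬ S i = z := fun hh => hz hh.symm
        simp [hz, hz']
    rw [hfe]
    exact hasSum_ite_eq (S i) (1:ℝ)
  have h2 : HasSum (fun z : Z => ∑ i : Fin m, if S i = z then (1:ℝ) else 0)
      (∑ _i : Fin m, (1:ℝ)) := hasSum_sum fun i _ => h1 i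
  have h3 := h2.mul_left (1/(m:ℝ))
  have hm0 : ((m:ℝ)) ≠ 0 := Nat.cast_ne_zero.mpr (by omega)
  have hval : (1/(m:ℝ)) * (∑ _i : Fin m, (1:ℝ)) = 1 := by
    simp only [Finset.sum_const, Finset.card_univ, Fintype.card_fin, nsmul_eq_mul, mul_one]
    field_simp
  rw [hval] at h3
  exact h3

lemma aux9_le_one {A : Type*} {f : A → ℝ} (h0 : ∀ a, 0 ≤ f a) (h1 : HasSum f 1) (a : A) :
    f a ≤ 1 := le_hasSum h1 a fun j _ => h0 j

end Aux9

section Aux9Domain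

variable {Z H : Type*}

lemma aux9_jointZH_eq (m : ℕ) (P : Z → ℝ) (Q : (Fin m → Z) → H → ℝ) (z : Z) (h : H) :
    jointZH m P Q z h
      = ∑' S : Fin m → Z, prodPMF m P S * aux9fr m z S * Q S h := rfl

lemma aux9_g_nonneg {m : ℕ} {P : Z → ℝ} (hP0 : ∀ x, 0 ≤ P x)
    {Q : (Fin m → Z) → H → ℝ} (hQ0 : ∀ S h, 0 ≤ Q S h) (z : Z) (h : H) (S : Fin m → Z) :
    0 ≤ prodPMF m P S * aux9fr m z S * Q S h :=
  mul_nonneg (mul_nonneg (aux9_prod_nonneg m hP0 S) (aux9_fr_nonneg m z S)) (hQ0 S h)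

lemma aux9_g_le {m : ℕ} {P : Z → ℝ} (hP0 : ∀ x, 0 ≤ P x)
    {Q : (Fin m → Z) → H → ℝ} (hQ : ∀ S, IsPMF (Q S)) (z : Z) (h : H) (S : Fin m → Z) :
    prodPMF m P S * aux9fr m z S * Q S h ≤ prodPMF m P S := by
  have hQ1 : Q S h ≤ 1 := aux9_le_one (hQ S).1 (hQ S).2 h
  have h1 : aux9fr m z S * Q S h ≤ 1 :=
    mul_le_one₀ (aux9_fr_le_one m z S) ((hQ S).1 h) hQ1
  calc prodPMF m P S * aux9fr m z S * Q S h
      = prodPMF m P S * (aux9fr m z S * Q S h) := by ring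
    _ ≤ prodPMF m P S * 1 :=
        mul_le_mul_of_nonneg_left h1 (aux9_prod_nonneg m hP0 S)
    _ = prodPMF m P S := mul_one _

lemma aux9_g_summable {m : ℕ} {P : Z → ℝ} (hP : IsPMF P)
    {Q : (Fin m → Z) → H → ℝ} (hQ : ∀ S, IsPMF (Q S)) (z : Z) (h : H) :
    Summable (fun S : Fin m → Z => prodPMF m P S * aux9fr m z S * Q S h) :=
  Summable.of_nonneg_of_le (aux9_g_nonneg hP.1 (fun S h => (hQ S).1 h) z h)
    (aux9_g_le hP.1 hQ z h) (aux9_prod_hasSum m hP.1 hP.2).summable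

lemma aux9_g_marginal {m : ℕ} {P : Z → ℝ} {Q : (Fin m → Z) → H → ℝ}
    (hQ : ∀ S, IsPMF (Q S)) (z : Z) :
    (fun S : Fin m → Z => ∑' h : H, prodPMF m P S * aux9fr m z S * Q S h)
      = fun S => prodPMF m P S * aux9fr m z S := by
  funext S
  rw [show (fun h : H => prodPMF m P S * aux9fr m z S * Q S h)
      = fun h => (prodPMF m P S * aux9fr m z S) * Q S h from rfl,
    tsum_mul_left, (hQ S).2.tsum_eq, mul_one]

/-- For fixed `z`, the summand of `jointZH` is jointly summable over `(S, h)`. -/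
lemma aux9_g_summable_prod {m : ℕ} (hm : 1 ≤ m) {P : Z → ℝ} (hP : IsPMF P)
    {Q : (Fin m → Z) → H → ℝ} (hQ : ∀ S, IsPMF (Q S)) (z : Z) :
    Summable (fun q : (Fin m → Z) × H =>
      prodPMF m P q.1 * aux9fr m z q.1 * Q q.1 q.2) := by
  have h0 : (0 : (Fin m → Z) × H → ℝ)
      ≤ fun q : (Fin m → Z) × H => prodPMF m P q.1 * aux9fr m z q.1 * Q q.1 q.2 :=
    fun q => aux9_g_nonneg hP.1 (fun S h => (hQ S).1 h) z q.2 q.1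
  have key := summable_prod_of_nonneg
    (f := fun q : (Fin m → Z) × H => prodPMF m P q.1 * aux9fr m z q.1 * Q q.1 q.2) h0
  have h1 : ∀ S : Fin m → Z, Summable (fun h : H => prodPMF m P S * aux9fr m z S * Q S h) :=
    fun S => (hQ S).2.summable.mul_left _
  have h2 : Summable (fun S : Fin m → Z => ∑' h : H, prodPMF m P S * aux9fr m z S * Q S h) := by
    rw [aux9_g_marginal hQ z]
    exact (aux9_nu_fr hm hP.1 hP.2 z).summable
  exact key.mpr ⟨h1, h2⟩

lemma aux9_margZ {m : ℕ} (hm : 1 ≤ m) {P : Z → ℝ} (hP : IsPMF P)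
    {Q : (Fin m → Z) → H → ℝ} (hQ : ∀ S, IsPMF (Q S)) (z : Z) :
    margZ m P Q z = P z := by
  have hcomm := Summable.tsum_comm'
    (f := fun (S : Fin m → Z) (h : H) => prodPMF m P S * aux9fr m z S * Q S h)
    (aux9_g_summable_prod hm hP hQ z)
    (fun S => (hQ S).2.summable.mul_left _)
    (fun h => aux9_g_summable hP hQ z h)
  calc margZ m P Q z
      = ∑' (h : H) (S : Fin m → Z), prodPMF m P S * aux9fr m z S * Q S h :=
        tsum_congr fun h => aux9_jointZH_eq m P Q z h
    _ = ∑' (S : Fin m → Z) (h : H), prodPMF m P S * aux9fr m z S * Q S h := hcomm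
    _ = ∑' S : Fin m → Z, prodPMF m P S * aux9fr m z S := by
        rw [aux9_g_marginal hQ z]
    _ = P z := (aux9_nu_fr hm hP.1 hP.2 z).tsum_eq

lemma aux9_margH_eq {m : ℕ} (hm : 1 ≤ m) {P : Z → ℝ} (hP : IsPMF P)
    {Q : (Fin m → Z) → H → ℝ} (hQ : ∀ S, IsPMF (Q S)) (h : H) :
    margH m P Q h = ∑' S : Fin m → Z, prodPMF m P S * Q S h := by
  have hslice : ∀ S : Fin m → Z, Summable (fun z : Z => prodPMF m P S * aux9fr m z S * Q S h) := by
    intro S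
    refine ((aux9_fr_hasSum hm S).summable.mul_left (prodPMF m P S * Q S h)).congr fun z => ?_
    ring
  have hmarg : (fun S : Fin m → Z => ∑' z : Z, prodPMF m P S * aux9fr m z S * Q S h)
      = fun S => prodPMF m P S * Q S h := by
    funext S
    have h1 : (fun z : Z => prodPMF m P S * aux9fr m z S * Q S h)
        = fun z => (prodPMF m P S * Q S h) * aux9fr m z S := by
      funext z; ring
    rw [h1, tsum_mul_left, (aux9_fr_hasSum hm S).tsum_eq, mul_one]
  have huncurry : Summable (fun q : (Fin m → Z) × Z =>
      prodPMF m P q.1 * aux9fr m q.2 q.1 * Q q.1 h) := by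
    have h0 : (0 : (Fin m → Z) × Z → ℝ)
        ≤ fun q : (Fin m → Z) × Z => prodPMF m P q.1 * aux9fr m q.2 q.1 * Q q.1 h :=
      fun q => aux9_g_nonneg hP.1 (fun S h => (hQ S).1 h) q.2 h q.1
    have key := summable_prod_of_nonneg
      (f := fun q : (Fin m → Z) × Z => prodPMF m P q.1 * aux9fr m q.2 q.1 * Q q.1 h) h0
    refine key.mpr ⟨hslice, ?_⟩
    rw [hmarg]
    refine Summable.of_nonneg_of_le
      (fun S => mul_nonneg (aux9_prod_nonneg m hP.1 S) ((hQ S).1 h))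
      (fun S => ?_) (aux9_prod_hasSum m hP.1 hP.2).summable
    calc prodPMF m P S * Q S h
        ≤ prodPMF m P S * 1 := mul_le_mul_of_nonneg_left
          (aux9_le_one (hQ S).1 (hQ S).2 h) (aux9_prod_nonneg m hP.1 S)
      _ = prodPMF m P S := mul_one _
  have hcomm := Summable.tsum_comm'
    (f := fun (S : Fin m → Z) (z : Z) => prodPMF m P S * aux9fr m z S * Q S h)
    huncurry hslice (fun z => aux9_g_summable hP hQ z h)
  calc margH m P Q h
      = ∑' (z : Z) (S : Fin m → Z), prodPMF m P S * aux9fr m z S * Q S h :=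
        tsum_congr fun z => aux9_jointZH_eq m P Q z h
    _ = ∑' (S : Fin m → Z) (z : Z), prodPMF m P S * aux9fr m z S * Q S h := hcomm
    _ = ∑' S : Fin m → Z, prodPMF m P S * Q S h := by rw [hmarg]

lemma aux9_nuQ_summable_prod {m : ℕ} {P : Z → ℝ} (hP : IsPMF P)
    {Q : (Fin m → Z) → H → ℝ} (hQ : ∀ S, IsPMF (Q S)) :
    Summable (fun q : (Fin m → Z) × H => prodPMF m P q.1 * Q q.1 q.2) := by
  have h0 : (0 : (Fin m → Z) × H → ℝ)
      ≤ fun q : (Fin m → Z) × H => prodPMF m P q.1 * Q q.1 q.2 :=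
    fun q => mul_nonneg (aux9_prod_nonneg m hP.1 q.1) ((hQ q.1).1 q.2)
  have key := summable_prod_of_nonneg
    (f := fun q : (Fin m → Z) × H => prodPMF m P q.1 * Q q.1 q.2) h0
  have h1 : ∀ S : Fin m → Z, Summable (fun h : H => prodPMF m P S * Q S h) :=
    fun S => (hQ S).2.summable.mul_left _
  have h2 : Summable (fun S : Fin m → Z => ∑' h : H, prodPMF m P S * Q S h) := by
    have h3 : (fun S : Fin m → Z => ∑' h : H, prodPMF m P S * Q S h) = prodPMF m P := by
      funext S
      rw [tsum_mul_left, (hQ S).2.tsum_eq, mul_one]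
    rw [h3]
    exact (aux9_prod_hasSum m hP.1 hP.2).summable
  exact key.mpr ⟨h1, h2⟩

lemma aux9_margH_hasSum {m : ℕ} (hm : 1 ≤ m) {P : Z → ℝ} (hP : IsPMF P)
    {Q : (Fin m → Z) → H → ℝ} (hQ : ∀ S, IsPMF (Q S)) :
    HasSum (margH m P Q) 1 := by
  have hK := aux9_nuQ_summable_prod hP hQ
  have hKsymm : Summable (fun q : H × (Fin m → Z) => prodPMF m P q.2 * Q q.2 q.1) :=
    hK.prod_symm
  have h0 : (0 : H × (Fin m → Z) → ℝ)
      ≤ fun q : H × (Fin m → Z) => prodPMF m P q.2 * Q q.2 q.1 :=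
    fun q => mul_nonneg (aux9_prod_nonneg m hP.1 q.2) ((hQ q.2).1 q.1)
  have hmargsum : Summable (fun h : H => ∑' S : Fin m → Z, prodPMF m P S * Q S h) :=
    ((summable_prod_of_nonneg h0).mp hKsymm).2
  have hsummable : Summable (margH m P Q) :=
    hmargsum.congr fun h => (aux9_margH_eq hm hP hQ h).symm
  have hcomm := Summable.tsum_comm'
    (f := fun (S : Fin m → Z) (h : H) => prodPMF m P S * Q S h)
    hK (fun S => (hQ S).2.summable.mul_left _)
    (fun h => ((summable_prod_of_nonneg h0).mp hKsymm).1 h)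
  have htot : ∑' h : H, margH m P Q h = 1 := by
    calc ∑' h : H, margH m P Q h
        = ∑' (h : H) (S : Fin m → Z), prodPMF m P S * Q S h :=
          tsum_congr fun h => aux9_margH_eq hm hP hQ h
      _ = ∑' (S : Fin m → Z) (h : H), prodPMF m P S * Q S h := hcomm
      _ = ∑' S : Fin m → Z, prodPMF m P S := by
          refine tsum_congr fun S => ?_
          rw [tsum_mul_left, (hQ S).2.tsum_eq, mul_one]
      _ = 1 := (aux9_prod_hasSum m hP.1 hP.2).tsum_eq
  exact htot ▸ hsummable.hasSum

lemma aux9_margH_nonneg {m : ℕ} {P : Z → ℝ} (hP0 : ∀ x, 0 ≤ P x)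
    {Q : (Fin m → Z) → H → ℝ} (hQ0 : ∀ S h, 0 ≤ Q S h) (h : H) :
    0 ≤ margH m P Q h := by
  refine tsum_nonneg fun z => ?_
  rw [aux9_jointZH_eq]
  exact tsum_nonneg fun S => aux9_g_nonneg hP0 hQ0 z h S

lemma aux9_joint_nonneg {m : ℕ} {P : Z → ℝ} (hP0 : ∀ x, 0 ≤ P x)
    {Q : (Fin m → Z) → H → ℝ} (hQ0 : ∀ S h, 0 ≤ Q S h) (z : Z) (h : H) :
    0 ≤ jointZH m P Q z h := by
  rw [aux9_jointZH_eq]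
  exact tsum_nonneg fun S => aux9_g_nonneg hP0 hQ0 z h S

lemma aux9_joint_slice_summable {m : ℕ} (hm : 1 ≤ m) {P : Z → ℝ} (hP : IsPMF P)
    {Q : (Fin m → Z) → H → ℝ} (hQ : ∀ S, IsPMF (Q S)) (z : Z) :
    Summable (fun h : H => jointZH m P Q z h) := by
  have hGz := aux9_g_summable_prod hm hP hQ z
  have hGzsymm : Summable (fun q : H × (Fin m → Z) =>
      prodPMF m P q.2 * aux9fr m z q.2 * Q q.2 q.1) := hGz.prod_symm
  have h0 : (0 : H × (Fin m → Z) → ℝ)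
      ≤ fun q : H × (Fin m → Z) => prodPMF m P q.2 * aux9fr m z q.2 * Q q.2 q.1 :=
    fun q => aux9_g_nonneg hP.1 (fun S h => (hQ S).1 h) z q.1 q.2
  have h1 : Summable (fun h : H => ∑' S : Fin m → Z, prodPMF m P S * aux9fr m z S * Q S h) :=
    ((summable_prod_of_nonneg h0).mp hGzsymm).2
  exact h1.congr fun h => (aux9_jointZH_eq m P Q z h).symm

lemma aux9_mu2_hasSum {m : ℕ} (hm : 1 ≤ m) {P : Z → ℝ} (hP : IsPMF P)
    {Q : (Fin m → Z) → H → ℝ} (hQ : ∀ S, IsPMF (Q S)) :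
    HasSum (fun p : Z × H => jointZH m P Q p.1 p.2) 1 := by
  have h0 : (0 : Z × H → ℝ) ≤ fun p : Z × H => jointZH m P Q p.1 p.2 :=
    fun p => aux9_joint_nonneg hP.1 (fun S h => (hQ S).1 h) p.1 p.2
  have key := summable_prod_of_nonneg (f := fun p : Z × H => jointZH m P Q p.1 p.2) h0
  have hslice : ∀ z : Z, Summable (fun h : H => jointZH m P Q z h) :=
    fun z => aux9_joint_slice_summable hm hP hQ z
  have hmargZ : (fun z : Z => ∑' h : H, jointZH m P Q z h) = fun z => P z := by
    funext z
    exact aux9_margZ hm hP hQ z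
  have hsummable : Summable (fun p : Z × H => jointZH m P Q p.1 p.2) := by
    refine key.mpr ⟨hslice, ?_⟩
    rw [hmargZ]
    exact hP.2.summable
  have htot : ∑' p : Z × H, jointZH m P Q p.1 p.2 = 1 := by
    rw [Summable.tsum_prod' hsummable hslice]
    calc ∑' (z : Z) (h : H), jointZH m P Q z h
        = ∑' z : Z, P z := by rw [hmargZ]
      _ = 1 := hP.2.tsum_eq
  exact htot ▸ hsummable.hasSum

lemma aux9_trueRisk {m : ℕ} (hm : 1 ≤ m) {P : Z → ℝ} (hP : IsPMF P)
    {Q : (Fin m → Z) → H → ℝ} (hQ : ∀ S, IsPMF (Q S)) {L : H → Z → ℝ}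
    (hL0 : ∀ h z, 0 ≤ L h z) (hL1 : ∀ h z, L h z ≤ 1) :
    trueRisk m P Q L = ∑' p : Z × H, margH m P Q p.2 * (P p.1 * L p.2 p.1) := by
  have margH0 : ∀ h, 0 ≤ margH m P Q h :=
    aux9_margH_nonneg hP.1 (fun S h => (hQ S).1 h)
  have hcS : ∀ h : H, Summable (fun z : Z => P z * L h z) := fun h =>
    Summable.of_nonneg_of_le (fun z => mul_nonneg (hP.1 z) (hL0 h z))
      (fun z => mul_le_of_le_one_right (hP.1 z) (hL1 h z)) hP.2.summable
  have hc0 : ∀ h, 0 ≤ ∑' z : Z, P z * L h z := fun h =>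
    tsum_nonneg fun z => mul_nonneg (hP.1 z) (hL0 h z)
  have hc1 : ∀ h, (∑' z : Z, P z * L h z) ≤ 1 := by
    intro h
    calc (∑' z : Z, P z * L h z) ≤ ∑' z : Z, P z :=
        Summable.tsum_le_tsum (fun z => mul_le_of_le_one_right (hP.1 z) (hL1 h z)) (hcS h)
          hP.2.summable
      _ = 1 := hP.2.tsum_eq
  have hQc : ∀ S, Summable (fun h : H => Q S h * ∑' z : Z, P z * L h z) := fun S =>
    Summable.of_nonneg_of_le (fun h => mul_nonneg ((hQ S).1 h) (hc0 h))
      (fun h => mul_le_of_le_one_right ((hQ S).1 h) (hc1 h)) (hQ S).2.summable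
  have hQc0 : ∀ S, 0 ≤ ∑' h : H, Q S h * ∑' z : Z, P z * L h z := fun S =>
    tsum_nonneg fun h => mul_nonneg ((hQ S).1 h) (hc0 h)
  have hQc1 : ∀ S, (∑' h : H, Q S h * ∑' z : Z, P z * L h z) ≤ 1 := by
    intro S
    calc (∑' h : H, Q S h * ∑' z : Z, P z * L h z) ≤ ∑' h : H, Q S h :=
        Summable.tsum_le_tsum (fun h => mul_le_of_le_one_right ((hQ S).1 h) (hc1 h)) (hQc S)
          (hQ S).2.summable
      _ = 1 := (hQ S).2.tsum_eq
  have hF0 : (0 : (Fin m → Z) × H → ℝ) ≤ fun q : (Fin m → Z) × H =>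
      prodPMF m P q.1 * (Q q.1 q.2 * ∑' z : Z, P z * L q.2 z) :=
    fun q => mul_nonneg (aux9_prod_nonneg m hP.1 q.1)
      (mul_nonneg ((hQ q.1).1 q.2) (hc0 q.2))
  have keyF := summable_prod_of_nonneg
    (f := fun q : (Fin m → Z) × H =>
      prodPMF m P q.1 * (Q q.1 q.2 * ∑' z : Z, P z * L q.2 z)) hF0
  have hF1 : ∀ S, Summable (fun h : H =>
      prodPMF m P S * (Q S h * ∑' z : Z, P z * L h z)) :=
    fun S => (hQc S).mul_left _
  have hF2 : Summable (fun S : Fin m → Z =>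
      ∑' h : H, prodPMF m P S * (Q S h * ∑' z : Z, P z * L h z)) := by
    have h3 : (fun S : Fin m → Z =>
          ∑' h : H, prodPMF m P S * (Q S h * ∑' z : Z, P z * L h z))
        = fun S => prodPMF m P S * ∑' h : H, Q S h * ∑' z : Z, P z * L h z := by
      funext S; rw [tsum_mul_left]
    rw [h3]
    refine Summable.of_nonneg_of_le
      (fun S => mul_nonneg (aux9_prod_nonneg m hP.1 S) (hQc0 S)) (fun S => ?_)
      (aux9_prod_hasSum m hP.1 hP.2).summable
    calc prodPMF m P S * ∑' h : H, Q S h * ∑' z : Z, P z * L h z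
        ≤ prodPMF m P S * 1 :=
          mul_le_mul_of_nonneg_left (hQc1 S) (aux9_prod_nonneg m hP.1 S)
      _ = prodPMF m P S := mul_one _
  have hFsum := keyF.mpr ⟨hF1, hF2⟩
  have hF3 : ∀ h : H, Summable (fun S : Fin m → Z =>
      prodPMF m P S * (Q S h * ∑' z : Z, P z * L h z)) := by
    intro h
    refine Summable.of_nonneg_of_le
      (fun S => mul_nonneg (aux9_prod_nonneg m hP.1 S)
        (mul_nonneg ((hQ S).1 h) (hc0 h)))
      (fun S => ?_) (aux9_prod_hasSum m hP.1 hP.2).summable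
    have hb : Q S h * ∑' z : Z, P z * L h z ≤ 1 :=
      mul_le_one₀ (aux9_le_one (hQ S).1 (hQ S).2 h) (hc0 h) (hc1 h)
    calc prodPMF m P S * (Q S h * ∑' z : Z, P z * L h z)
        ≤ prodPMF m P S * 1 :=
          mul_le_mul_of_nonneg_left hb (aux9_prod_nonneg m hP.1 S)
      _ = prodPMF m P S := mul_one _
  have hcomm := Summable.tsum_comm'
    (f := fun (S : Fin m → Z) (h : H) =>
      prodPMF m P S * (Q S h * ∑' z : Z, P z * L h z)) hFsum hF1 hF3
  have hinner : ∀ h : H,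
      (∑' S : Fin m → Z, prodPMF m P S * (Q S h * ∑' z : Z, P z * L h z))
        = margH m P Q h * ∑' z : Z, P z * L h z := by
    intro h
    have h4 : (fun S : Fin m → Z => prodPMF m P S * (Q S h * ∑' z : Z, P z * L h z))
        = fun S => (prodPMF m P S * Q S h) * ∑' z : Z, P z * L h z := by
      funext S; ring
    rw [h4, tsum_mul_right, ← aux9_margH_eq hm hP hQ h]
  have step1 : trueRisk m P Q L
      = ∑' h : H, margH m P Q h * ∑' z : Z, P z * L h z := by
    calc trueRisk m P Q L
        = ∑' (S : Fin m → Z) (h : H),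
            prodPMF m P S * (Q S h * ∑' z : Z, P z * L h z) := by
          refine tsum_congr fun S => ?_
          exact (tsum_mul_left).symm
      _ = ∑' (h : H) (S : Fin m → Z),
            prodPMF m P S * (Q S h * ∑' z : Z, P z * L h z) := hcomm.symm
      _ = ∑' h : H, margH m P Q h * ∑' z : Z, P z * L h z := tsum_congr hinner
  have hHZ0 : (0 : H × Z → ℝ)
      ≤ fun q : H × Z => margH m P Q q.1 * (P q.2 * L q.1 q.2) :=
    fun q => mul_nonneg (margH0 q.1) (mul_nonneg (hP.1 q.2) (hL0 _ _))
  have keyHZ := summable_prod_of_nonneg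
    (f := fun q : H × Z => margH m P Q q.1 * (P q.2 * L q.1 q.2)) hHZ0
  have hHZ1 : ∀ h, Summable (fun z : Z => margH m P Q h * (P z * L h z)) :=
    fun h => (hcS h).mul_left _
  have hHZ2 : Summable (fun h : H => ∑' z : Z, margH m P Q h * (P z * L h z)) := by
    have h5 : (fun h : H => ∑' z : Z, margH m P Q h * (P z * L h z))
        = fun h => margH m P Q h * ∑' z : Z, P z * L h z := by
      funext h; rw [tsum_mul_left]
    rw [h5]
    refine Summable.of_nonneg_of_le (fun h => mul_nonneg (margH0 h) (hc0 h))
      (fun h => mul_le_of_le_one_right (margH0 h) (hc1 h))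
      (aux9_margH_hasSum hm hP hQ).summable
  have hHZsum := keyHZ.mpr ⟨hHZ1, hHZ2⟩
  rw [step1]
  calc ∑' h : H, margH m P Q h * ∑' z : Z, P z * L h z
      = ∑' (h : H) (z : Z), margH m P Q h * (P z * L h z) := by
        refine tsum_congr fun h => ?_
        exact (tsum_mul_left).symm
    _ = ∑' q : H × Z, margH m P Q q.1 * (P q.2 * L q.1 q.2) :=
        (Summable.tsum_prod' hHZsum hHZ1).symm
    _ = ∑' p : Z × H, margH m P Q p.2 * (P p.1 * L p.2 p.1) := by
        rw [← (Equiv.prodComm Z H).tsum_eq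
          (fun q : H × Z => margH m P Q q.1 * (P q.2 * L q.1 q.2))]
        exact tsum_congr fun p => by simp

lemma aux9_empRisk {m : ℕ} (hm : 1 ≤ m) {P : Z → ℝ} (hP : IsPMF P)
    {Q : (Fin m → Z) → H → ℝ} (hQ : ∀ S, IsPMF (Q S)) {L : H → Z → ℝ}
    (hL0 : ∀ h z, 0 ≤ L h z) (hL1 : ∀ h z, L h z ≤ 1) :
    empRisk m P Q L = ∑' p : Z × H, jointZH m P Q p.1 p.2 * L p.2 p.1 := by
  letI := Classical.decEq Z
  have hm0 : ((m : ℝ)) ≠ 0 := Nat.cast_ne_zero.mpr (by omega)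
  have hiteSum : ∀ (S : Fin m → Z) (h : H) (i : Fin m),
      HasSum (fun z : Z => (if S i = z then (1:ℝ) else 0) * L h z) (L h (S i)) := by
    intro S h i
    have hfe : (fun z : Z => (if S i = z then (1:ℝ) else 0) * L h z)
        = fun z => if z = S i then L h (S i) else 0 := by
      funext z
      by_cases hz : z = S i
      · subst hz; simp
      · have hz' : ¬ S i = z := fun hh => hz hh.symm
        simp [hz, hz']
    rw [hfe]
    exact hasSum_ite_eq (S i) (L h (S i))
  have hfrL : ∀ (S : Fin m → Z) (h : H),
      HasSum (fun z : Z => aux9fr m z S * L h z) ((1/(m:ℝ)) * ∑ i, L h (S i)) := by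
    intro S h
    have h2 : HasSum (fun z : Z => ∑ i : Fin m, (if S i = z then (1:ℝ) else 0) * L h z)
        (∑ i : Fin m, L h (S i)) := hasSum_sum fun i _ => hiteSum S h i
    have h3 := h2.mul_left (1/(m:ℝ))
    have hfun : (fun z : Z =>
          (1/(m:ℝ)) * ∑ i : Fin m, (if S i = z then (1:ℝ) else 0) * L h z)
        = fun z => aux9fr m z S * L h z := by
      funext z
      show _ = ((1/(m:ℝ)) * ∑ i : Fin m, if S i = z then (1:ℝ) else 0) * L h z
      rw [mul_assoc, Finset.sum_mul]
    rw [hfun] at h3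
    exact h3
  have hcS0 : ∀ (S : Fin m → Z) (h : H), 0 ≤ (1/(m:ℝ)) * ∑ i, L h (S i) :=
    fun S h => mul_nonneg (by positivity) (Finset.sum_nonneg fun i _ => hL0 _ _)
  have hcS1 : ∀ (S : Fin m → Z) (h : H), ((1/(m:ℝ)) * ∑ i, L h (S i)) ≤ 1 := by
    intro S h
    have hb : (∑ i : Fin m, L h (S i)) ≤ (m : ℝ) := by
      calc (∑ i : Fin m, L h (S i)) ≤ ∑ _i : Fin m, (1:ℝ) :=
          Finset.sum_le_sum fun i _ => hL1 _ _
        _ = m := by simp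
    calc (1/(m:ℝ)) * ∑ i, L h (S i) ≤ (1/(m:ℝ)) * m :=
        mul_le_mul_of_nonneg_left hb (by positivity)
      _ = 1 := by field_simp
  have hB1 : ∀ (S : Fin m → Z) (h : H),
      Summable (fun z : Z => Q S h * (aux9fr m z S * L h z)) :=
    fun S h => ((hfrL S h).summable).mul_left _
  have hBmarg : ∀ S : Fin m → Z,
      (fun h : H => ∑' z : Z, Q S h * (aux9fr m z S * L h z))
        = fun h => Q S h * ((1/(m:ℝ)) * ∑ i, L h (S i)) := by
    intro S; funext h
    rw [tsum_mul_left, (hfrL S h).tsum_eq]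
  have hB0 : ∀ S : Fin m → Z, (0 : H × Z → ℝ)
      ≤ fun q : H × Z => Q S q.1 * (aux9fr m q.2 S * L q.1 q.2) :=
    fun S q => mul_nonneg ((hQ S).1 q.1)
      (mul_nonneg (aux9_fr_nonneg _ _ _) (hL0 _ _))
  have hQcS : ∀ S : Fin m → Z,
      Summable (fun h : H => Q S h * ((1/(m:ℝ)) * ∑ i, L h (S i))) := fun S =>
    Summable.of_nonneg_of_le (fun h => mul_nonneg ((hQ S).1 h) (hcS0 S h))
      (fun h => mul_le_of_le_one_right ((hQ S).1 h) (hcS1 S h)) (hQ S).2.summable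
  have hB : ∀ S : Fin m → Z,
      Summable (fun q : H × Z => Q S q.1 * (aux9fr m q.2 S * L q.1 q.2)) := by
    intro S
    have key := summable_prod_of_nonneg
      (f := fun q : H × Z => Q S q.1 * (aux9fr m q.2 S * L q.1 q.2)) (hB0 S)
    have hmargS : Summable (fun h : H => ∑' z : Z, Q S h * (aux9fr m z S * L h z)) := by
      rw [hBmarg S]
      exact hQcS S
    exact key.mpr ⟨fun h => hB1 S h, hmargS⟩
  have hinner : ∀ S : Fin m → Z,
      (∑' h : H, Q S h * ((1/(m:ℝ)) * ∑ i, L h (S i)))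
        = ∑' q : H × Z, Q S q.1 * (aux9fr m q.2 S * L q.1 q.2) := by
    intro S
    rw [Summable.tsum_prod' (hB S) (fun h => hB1 S h)]
    exact tsum_congr fun h => (congrFun (hBmarg S) h).symm
  have hBsumle : ∀ S : Fin m → Z,
      (∑' q : H × Z, Q S q.1 * (aux9fr m q.2 S * L q.1 q.2)) ≤ 1 := by
    intro S
    rw [← hinner S]
    calc (∑' h : H, Q S h * ((1/(m:ℝ)) * ∑ i, L h (S i))) ≤ ∑' h : H, Q S h :=
        Summable.tsum_le_tsum (fun h => mul_le_of_le_one_right ((hQ S).1 h) (hcS1 S h))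
          (hQcS S) (hQ S).2.summable
      _ = 1 := (hQ S).2.tsum_eq
  have hE0 : (0 : (Fin m → Z) × (H × Z) → ℝ) ≤ fun r : (Fin m → Z) × (H × Z) =>
      prodPMF m P r.1 * (Q r.1 r.2.1 * (aux9fr m r.2.2 r.1 * L r.2.1 r.2.2)) :=
    fun r => mul_nonneg (aux9_prod_nonneg m hP.1 r.1) (hB0 r.1 r.2)
  have keyE := summable_prod_of_nonneg
    (f := fun r : (Fin m → Z) × (H × Z) =>
      prodPMF m P r.1 * (Q r.1 r.2.1 * (aux9fr m r.2.2 r.1 * L r.2.1 r.2.2))) hE0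
  have hE1 : ∀ S : Fin m → Z, Summable (fun q : H × Z =>
      prodPMF m P S * (Q S q.1 * (aux9fr m q.2 S * L q.1 q.2))) :=
    fun S => (hB S).mul_left _
  have hE2 : Summable (fun S : Fin m → Z =>
      ∑' q : H × Z, prodPMF m P S * (Q S q.1 * (aux9fr m q.2 S * L q.1 q.2))) := by
    have h6 : (fun S : Fin m → Z =>
          ∑' q : H × Z, prodPMF m P S * (Q S q.1 * (aux9fr m q.2 S * L q.1 q.2)))
        = fun S => prodPMF m P S
            * ∑' q : H × Z, Q S q.1 * (aux9fr m q.2 S * L q.1 q.2) := by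
      funext S; rw [tsum_mul_left]
    rw [h6]
    refine Summable.of_nonneg_of_le
      (fun S => mul_nonneg (aux9_prod_nonneg m hP.1 S)
        (tsum_nonneg fun q => hB0 S q))
      (fun S => ?_) (aux9_prod_hasSum m hP.1 hP.2).summable
    calc prodPMF m P S * ∑' q : H × Z, Q S q.1 * (aux9fr m q.2 S * L q.1 q.2)
        ≤ prodPMF m P S * 1 :=
          mul_le_mul_of_nonneg_left (hBsumle S) (aux9_prod_nonneg m hP.1 S)
      _ = prodPMF m P S := mul_one _
  have hEsum := keyE.mpr ⟨hE1, hE2⟩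
  have hE3 : ∀ q : H × Z, Summable (fun S : Fin m → Z =>
      prodPMF m P S * (Q S q.1 * (aux9fr m q.2 S * L q.1 q.2))) := by
    intro q
    refine Summable.of_nonneg_of_le
      (fun S => mul_nonneg (aux9_prod_nonneg m hP.1 S) (hB0 S q)) (fun S => ?_)
      (aux9_prod_hasSum m hP.1 hP.2).summable
    have hb : Q S q.1 * (aux9fr m q.2 S * L q.1 q.2) ≤ 1 :=
      mul_le_one₀ (aux9_le_one (hQ S).1 (hQ S).2 q.1)
        (mul_nonneg (aux9_fr_nonneg _ _ _) (hL0 _ _))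
        (mul_le_one₀ (aux9_fr_le_one _ _ _) (hL0 _ _) (hL1 _ _))
    calc prodPMF m P S * (Q S q.1 * (aux9fr m q.2 S * L q.1 q.2))
        ≤ prodPMF m P S * 1 :=
          mul_le_mul_of_nonneg_left hb (aux9_prod_nonneg m hP.1 S)
      _ = prodPMF m P S := mul_one _
  have hcomm := Summable.tsum_comm'
    (f := fun (S : Fin m → Z) (q : H × Z) =>
      prodPMF m P S * (Q S q.1 * (aux9fr m q.2 S * L q.1 q.2))) hEsum hE1 hE3
  have hlast : ∀ q : H × Z,
      (∑' S : Fin m → Z, prodPMF m P S * (Q S q.1 * (aux9fr m q.2 S * L q.1 q.2)))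
        = jointZH m P Q q.2 q.1 * L q.1 q.2 := by
    intro q
    have h7 : (fun S : Fin m → Z =>
          prodPMF m P S * (Q S q.1 * (aux9fr m q.2 S * L q.1 q.2)))
        = fun S => (prodPMF m P S * aux9fr m q.2 S * Q S q.1) * L q.1 q.2 := by
      funext S; ring
    rw [h7, tsum_mul_right, ← aux9_jointZH_eq]
  calc empRisk m P Q L
      = ∑' (S : Fin m → Z) (h : H),
          prodPMF m P S * (Q S h * ((1/(m:ℝ)) * ∑ i, L h (S i))) := by
        refine tsum_congr fun S => ?_
        exact (tsum_mul_left).symm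
    _ = ∑' (S : Fin m → Z) (q : H × Z),
          prodPMF m P S * (Q S q.1 * (aux9fr m q.2 S * L q.1 q.2)) := by
        refine tsum_congr fun S => ?_
        rw [tsum_mul_left, tsum_mul_left, hinner S]
    _ = ∑' (q : H × Z) (S : Fin m → Z),
          prodPMF m P S * (Q S q.1 * (aux9fr m q.2 S * L q.1 q.2)) := hcomm.symm
    _ = ∑' q : H × Z, jointZH m P Q q.2 q.1 * L q.1 q.2 := tsum_congr hlast
    _ = ∑' p : Z × H, jointZH m P Q p.1 p.2 * L p.2 p.1 := by
        rw [← (Equiv.prodComm Z H).tsum_eq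
          (fun q : H × Z => jointZH m P Q q.2 q.1 * L q.1 q.2)]
        exact tsum_congr fun p => by simp

end Aux9Domain

/-- Theorem 1, tightness: the loss
`L⋆(h,z) = 1{μ_Z(z)·μ_H(h) ≥ μ(z,h)}` takes values in `[0,1]` and achieves
`R - R_emp = I(Z_trn, H)`. -/
theorem stmt9 {Z H : Type*} [Countable Z] [Countable H] (m : ℕ) (hm : 1 ≤ m)
    (P : Z → ℝ) (hP : IsPMF P)
    (Q : (Fin m → Z) → H → ℝ) (hQ : ∀ S, IsPMF (Q S))
    (L : H → Z → ℝ)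
    (hLdef : ∀ h z, L h z =
      if jointZH m P Q z h ≤ margZ m P Q z * margH m P Q h then 1 else 0) :
    (∀ h z, 0 ≤ L h z ∧ L h z ≤ 1) ∧
      trueRisk m P Q L - empRisk m P Q L = affinity m P Q := by
  have hL01 : ∀ h z, 0 ≤ L h z ∧ L h z ≤ 1 := by
    intro h z
    rw [hLdef h z]
    split <;> norm_num
  refine ⟨hL01, ?_⟩
  have hL0 : ∀ h z, 0 ≤ L h z := fun h z => (hL01 h z).1
  have hL1 : ∀ h z, L h z ≤ 1 := fun h z => (hL01 h z).2
  have hQ0 : ∀ S h, 0 ≤ Q S h := fun S h => (hQ S).1 h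
  have margH0 : ∀ h, 0 ≤ margH m P Q h := aux9_margH_nonneg hP.1 hQ0
  have hmu2 := aux9_mu2_hasSum hm hP hQ
  have hnu2 : HasSum (fun p : Z × H => P p.1 * margH m P Q p.2) 1 := by
    have h1 := aux9_hasSum_mul (f := P) (g := margH m P Q) hP.1 margH0 hP.2
      (aux9_margH_hasSum hm hP hQ)
    simpa using h1
  have hT : Summable (fun p : Z × H => margH m P Q p.2 * (P p.1 * L p.2 p.1)) := by
    refine Summable.of_nonneg_of_le
      (fun p => mul_nonneg (margH0 p.2) (mul_nonneg (hP.1 p.1) (hL0 _ _)))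
      (fun p => ?_) hnu2.summable
    calc margH m P Q p.2 * (P p.1 * L p.2 p.1)
        = (P p.1 * margH m P Q p.2) * L p.2 p.1 := by ring
      _ ≤ (P p.1 * margH m P Q p.2) * 1 :=
          mul_le_mul_of_nonneg_left (hL1 _ _)
            (mul_nonneg (hP.1 p.1) (margH0 p.2))
      _ = P p.1 * margH m P Q p.2 := mul_one _
  have hE : Summable (fun p : Z × H => jointZH m P Q p.1 p.2 * L p.2 p.1) := by
    refine Summable.of_nonneg_of_le
      (fun p => mul_nonneg (aux9_joint_nonneg hP.1 hQ0 p.1 p.2) (hL0 _ _))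
      (fun p => ?_) hmu2.summable
    calc jointZH m P Q p.1 p.2 * L p.2 p.1
        ≤ jointZH m P Q p.1 p.2 * 1 :=
          mul_le_mul_of_nonneg_left (hL1 _ _) (aux9_joint_nonneg hP.1 hQ0 p.1 p.2)
      _ = jointZH m P Q p.1 p.2 := mul_one _
  have hmin : Summable (fun p : Z × H =>
      min (P p.1 * margH m P Q p.2) (jointZH m P Q p.1 p.2)) := by
    refine Summable.of_nonneg_of_le
      (fun p => le_min (mul_nonneg (hP.1 p.1) (margH0 p.2))
        (aux9_joint_nonneg hP.1 hQ0 p.1 p.2))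
      (fun p => min_le_left _ _) hnu2.summable
  rw [aux9_trueRisk hm hP hQ hL0 hL1, aux9_empRisk hm hP hQ hL0 hL1,
    ← Summable.tsum_sub hT hE]
  have hkey : (fun p : Z × H =>
        margH m P Q p.2 * (P p.1 * L p.2 p.1) - jointZH m P Q p.1 p.2 * L p.2 p.1)
      = fun p => P p.1 * margH m P Q p.2
          - min (P p.1 * margH m P Q p.2) (jointZH m P Q p.1 p.2) := by
    funext p
    rw [hLdef p.2 p.1, aux9_margZ hm hP hQ p.1]
    by_cases hc : jointZH m P Q p.1 p.2 ≤ P p.1 * margH m P Q p.2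
    · rw [if_pos hc, min_eq_right hc]; ring
    · rw [if_neg hc, min_eq_left (le_of_not_ge hc)]; ring
  rw [hkey, Summable.tsum_sub hnu2.summable hmin, hnu2.tsum_eq]
  unfold affinity tv
  congr 1
  refine tsum_congr fun p => ?_
  show min (P p.1 * margH m P Q p.2) (jointZH m P Q p.1 p.2)
      = min (margZ m P Q p.1 * margH m P Q p.2) (jointZH m P Q p.1 p.2)
  rw [aux9_margZ hm hP hQ p.1]
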